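/- A groupoid (Q,·) is a pentagonal quasigroup if and only if there exists an Abelian group structure (Q,+) and an automorphism φ of (Q,+) with no nonzero fixed points such that x·y = φ(x) + y − φ(y) for all x,y and φ⁴ − φ³ + φ² − φ + id = 0. -/
import Mathlib


/-- A pentagonal quasigroup: a quasigroup (unique left/right division)
satisfying idempotency, mediality and the pentagonal identity. -/
def IsPentagonal {Q : Type*} (m : Q → Q → Q) : Prop :=
  (∀ a b : Q, ∃! x, m a x = b) ∧
  (∀ a b : Q, ∃! x, m x a = b) ∧
  (∀ x, m x x = x) ∧
  (∀ x y z u, m (m x y) (m z u) = m (m x z) (m y u)) ∧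
  (∀ x y, m (m (m (m x y) x) y) x = y)

private lemma pent_sub_aux {G : Type*} [AddCommGroup G] {a b c : G}
    (h : c = 0) (hab : a - b = c) : a = b :=
  sub_eq_zero.mp (hab.trans h)

private lemma pent_sub_aux2 {G : Type*} [AddCommGroup G] {a b c : G}
    (h : c = 0) (hab : a - b = -c) : a = b :=
  sub_eq_zero.mp (by rw [hab, h, neg_zero])

private lemma pent_sub_aux3 {G : Type*} [AddCommGroup G] {a b c d : G}
    (h : c = 0) (h' : d = 0) (hab : a - b = c - d) : a = b :=
  sub_eq_zero.mp (by rw [hab, h, h', sub_zero])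

theorem pentagonal_characterization (Q : Type*) [Nonempty Q] (m : Q → Q → Q) :
    IsPentagonal m ↔
      ∃ (_ : AddCommGroup Q) (φ : Q →+ Q),
        Function.Bijective φ ∧
        (∀ x : Q, φ x = x → x = 0) ∧
        (∀ x y : Q, m x y = φ x + y - φ y) ∧
        (∀ x : Q, φ (φ (φ (φ x))) - φ (φ (φ x)) + φ (φ x) - φ x + x = 0) := by
  constructor
  · rintro ⟨hL, hR, hidem, hmed, hpent⟩
    set e : Q := Classical.arbitrary Q with he
    -- f = right division by e (inverse of x ↦ m x e), g = left division
    set f : Q → Q := fun a => (hR e a).choose with hfdef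
    set g : Q → Q := fun a => (hL e a).choose with hgdef
    have hf : ∀ a, m (f a) e = a := fun a => (hR e a).choose_spec.1
    have huf : ∀ a x, m x e = a → x = f a := fun a x hx => (hR e a).choose_spec.2 x hx
    have hg : ∀ a, m e (g a) = a := fun a => (hL e a).choose_spec.1
    have hug : ∀ a x, m e x = a → x = g a := fun a x hx => (hL e a).choose_spec.2 x hx
    have sinj : ∀ {x y : Q}, m x e = m y e → x = y := by
      intro x y h
      rw [huf (m x e) x rfl, huf (m y e) y rfl, h]
    have linj : ∀ {x y : Q}, m e x = m e y → x = y := by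
      intro x y h
      rw [hug (m e x) x rfl, hug (m e y) y rfl, h]
    have hfe : f e = e := (huf e e (hidem e)).symm
    have hge : g e = e := (hug e e (hidem e)).symm
    have hfs : ∀ x, f (m x e) = x := fun x => (huf (m x e) x rfl).symm
    have hgl : ∀ x, g (m e x) = x := fun x => (hug (m e x) x rfl).symm
    -- commutation of left and right translations by e
    have siglam : ∀ x, m (m e x) e = m e (m x e) := by
      intro x
      have := hmed e x e e
      rwa [hidem e] at this
    have sigmul : ∀ x y, m (m x y) e = m (m x e) (m y e) := by
      intro x y
      have := hmed x y e e
      rwa [hidem e] at this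
    have lammul : ∀ x y, m e (m x y) = m (m e x) (m e y) := by
      intro x y
      have := hmed e e x y
      rwa [hidem e] at this
    have hflam : ∀ x, f (m e x) = m e (f x) := by
      intro x
      apply sinj
      rw [hf, siglam, hf]
    have hgsig : ∀ x, g (m x e) = m (g x) e := by
      intro x
      apply linj
      rw [hg, ← siglam, hg]
    have hfg : ∀ x, f (g x) = g (f x) := by
      intro x
      apply linj
      rw [← hflam, hg, hg]
    have hfmul : ∀ x y, f (m x y) = m (f x) (f y) := by
      intro x y
      apply sinj
      rw [hf, sigmul, hf, hf]
    have hgmul : ∀ x y, g (m x y) = m (g x) (g y) := by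
      intro x y
      apply linj
      rw [hg, lammul, hg, hg]
    -- group structure
    letI instAdd : Add Q := ⟨fun a b => m (f a) (g b)⟩
    letI instZero : Zero Q := ⟨e⟩
    letI instNeg : Neg Q := ⟨fun a => m ((hR (g a) e).choose) e⟩
    have hadd : ∀ a b : Q, a + b = m (f a) (g b) := fun _ _ => rfl
    have hassoc : ∀ a b c : Q, a + b + c = a + (b + c) := by
      intro a b c
      show m (f (m (f a) (g b))) (g c) = m (f a) (g (m (f b) (g c)))
      rw [hfmul, hgmul]
      conv_lhs => rw [show g c = m e (g (g c)) from (hg (g c)).symm]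
      rw [hmed, hf, hfg]
    have hzero_add : ∀ a : Q, 0 + a = a := by
      intro a
      show m (f e) (g a) = a
      rw [hfe]; exact hg a
    have hneg_add : ∀ a : Q, -a + a = 0 := by
      intro a
      show m (f (m ((hR (g a) e).choose) e)) (g a) = e
      rw [hfs]
      exact (hR (g a) e).choose_spec.1
    have hcomm : ∀ a b : Q, a + b = b + a := by
      intro a b
      show m (f a) (g b) = m (f b) (g a)
      have k1 : m (f a) (g b) = m (m e (g (f a))) (m (g (f b)) e) := by
        rw [hg (f a), ← hgsig, hf]
      have k2 : m (f b) (g a) = m (m e (g (f b))) (m (g (f a)) e) := by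
        rw [hg (f b), ← hgsig, hf]
      rw [k1, k2]
      exact hmed e (g (f a)) (g (f b)) e
    letI instAG : AddGroup Q := AddGroup.ofLeftAxioms hassoc hzero_add hneg_add
    letI instACG : AddCommGroup Q := { instAG with add_comm := hcomm }
    -- the automorphism φ x = m x e
    have hphi_add : ∀ a b : Q, m (a + b) e = m a e + m b e := by
      intro a b
      rw [hadd a b, hadd (m a e) (m b e), sigmul, hf, hfs, hgsig]
    set φ : Q →+ Q := AddMonoidHom.mk' (fun x => m x e) hphi_add with hφdef
    have hφ : ∀ x, φ x = m x e := fun _ => rfl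
    have hzeroe : (0 : Q) = e := rfl
    -- m x y = φ x + y - φ y
    have hsum : ∀ y : Q, m y e + m e y = y := by
      intro y
      rw [hadd, hfs, hgl]
      exact hidem y
    have hmeq : ∀ x y : Q, m x y = φ x + y - φ y := by
      intro x y
      have h1 : m x e + m e y = m x y := by rw [hadd, hfs, hgl]
      have h2 : m e y = y - m y e := by
        rw [eq_sub_iff_add_eq']
        exact hsum y
      rw [hφ, hφ, ← h1, h2]
      abel
    have hpoly : ∀ x : Q, φ (φ (φ (φ x))) - φ (φ (φ x)) + φ (φ x) - φ x + x = 0 := by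
      intro x
      have hp := hpent x 0
      simp only [hmeq, map_add, map_sub, map_zero, add_zero, sub_zero, zero_sub] at hp
      rw [← hp]
      abel
    refine ⟨instACG, φ, ⟨fun x y hxy => sinj hxy, fun a => ⟨f a, hf a⟩⟩, ?_, hmeq, hpoly⟩
    intro x hx
    have hp := hpoly x
    simp only [hx] at hp
    simpa using hp
  · rintro ⟨_, φ, ⟨φinj, φsur⟩, hreg, hm, hpoly⟩
    have core : ∀ y : Q, φ (φ (φ y)) + φ y - (φ (φ (φ (φ y))) + φ (φ y)) = y := by
      intro y
      exact pent_sub_aux2 (hpoly y) (by abel)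
    refine ⟨?_, ?_, ?_, ?_, ?_⟩
    · -- left division
      intro a b
      refine ⟨φ (φ (φ (b - φ a))) + φ (b - φ a), ?_, ?_⟩
      · show m a (φ (φ (φ (b - φ a))) + φ (b - φ a)) = b
        rw [hm, map_add]
        rw [add_sub_assoc, core (b - φ a)]
        abel
      · intro z hz
        have h1 : z - φ z = b - φ a := by rw [← hz, hm]; abel
        have h2 : φ (φ (φ (z - φ z))) + φ (z - φ z) = z :=
          pent_sub_aux2 (hpoly z) (by simp only [map_sub]; abel)
        rw [← h2, h1]
    · -- right division
      intro a b
      obtain ⟨x, hx⟩ := φsur (b - (a - φ a))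
      refine ⟨x, ?_, ?_⟩
      · show m x a = b
        rw [hm, hx]; abel
      · intro z hz
        apply φinj
        rw [hm] at hz
        have h2 : φ z = b - (a - φ a) := by rw [← hz]; abel
        exact h2.trans hx.symm
    · intro x
      rw [hm]; abel
    · intro x y z u
      simp only [hm, map_add, map_sub]
      abel
    · intro x y
      simp only [hm, map_add, map_sub]
      exact pent_sub_aux3 (hpoly x) (hpoly y) (by abel)
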